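/- Let σ_w > 0, σ_{w²} > 0, D ≥ 0, k > 0 and q be real numbers, and set V₁ := 4σ_w²·D + σ_{w²}². Then for every θ ≥ 0 with θ ≤ D − q·√(V₁/k), it holds that θ + q·√((4σ_w²·θ + σ_{w²}²)/k) ≤ D. -/
import Mathlib

/-- core inequality of Lemma 1. With `V₁ := 4σ_w²·D + σ_{w²}²`, for every
`θ ≥ 0` with `θ ≤ D − q·√(V₁/k)`, it holds that `θ + q·√((4σ_w²·θ + σ_{w²}²)/k) ≤ D`. -/
theorem stmt_3 (σw σw2 D k q : ℝ) (hσw : 0 < σw) (hσw2 : 0 < σw2) (hD : 0 ≤ D) (hk : 0 < k)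
    (θ : ℝ) (hθ0 : 0 ≤ θ)
    (hθ : θ ≤ D - q * Real.sqrt ((4 * σw ^ 2 * D + σw2 ^ 2) / k)) :
    θ + q * Real.sqrt ((4 * σw ^ 2 * θ + σw2 ^ 2) / k) ≤ D := by
  have hσ2 : (0:ℝ) < σw ^ 2 := by positivity
  rcases le_total q 0 with hq | hq
  · rcases le_total θ D with hθD | hθD
    · have h1 : q * Real.sqrt ((4 * σw ^ 2 * θ + σw2 ^ 2) / k) ≤ 0 :=
        mul_nonpos_of_nonpos_of_nonneg hq (Real.sqrt_nonneg _)
      linarith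
    · have hs : Real.sqrt ((4 * σw ^ 2 * D + σw2 ^ 2) / k)
          ≤ Real.sqrt ((4 * σw ^ 2 * θ + σw2 ^ 2) / k) := by
        apply Real.sqrt_le_sqrt
        have : 4 * σw ^ 2 * D + σw2 ^ 2 ≤ 4 * σw ^ 2 * θ + σw2 ^ 2 := by nlinarith
        exact div_le_div_of_nonneg_right this hk.le
      have := mul_le_mul_of_nonpos_left hs hq
      linarith
  · have hθD : θ ≤ D := by
      have : 0 ≤ q * Real.sqrt ((4 * σw ^ 2 * D + σw2 ^ 2) / k) :=
        mul_nonneg hq (Real.sqrt_nonneg _)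
      linarith
    have hs : Real.sqrt ((4 * σw ^ 2 * θ + σw2 ^ 2) / k)
        ≤ Real.sqrt ((4 * σw ^ 2 * D + σw2 ^ 2) / k) := by
      apply Real.sqrt_le_sqrt
      have : 4 * σw ^ 2 * θ + σw2 ^ 2 ≤ 4 * σw ^ 2 * D + σw2 ^ 2 := by nlinarith
      exact div_le_div_of_nonneg_right this hk.le
    have := mul_le_mul_of_nonneg_left hs hq
    linarith
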